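/- Let k be a field and X' a variable of the polynomial ring k[X₁,…,Xₙ] (i.e., there exist elements generating the polynomial ring together with X' as a polynomial ring). Then the ideal (X', X₁) equals the unit ideal if and only if X' = αX₁ + β for some units α, β ∈ k*. -/

import Mathlib

open MvPolynomial

lemma mv_isUnit_eq_C {k : Type*} [Field k] : ∀ (m : ℕ) (p : MvPolynomial (Fin m) k),
    IsUnit p → ∃ c : k, c ≠ 0 ∧ p = C c := by
  intro m
  induction m with
  | zero =>
    intro p hp
    have h := p.eq_C_of_isEmpty
    refine ⟨p.coeff 0, fun hc => ?_, h⟩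
    rw [hc, map_zero] at h
    exact hp.ne_zero h
  | succ m ih =>
    intro p hp
    have hup : IsUnit (finSuccEquiv k m p) := hp.map _
    rw [Polynomial.isUnit_iff] at hup
    obtain ⟨r, hr, hrp⟩ := hup
    obtain ⟨c, hc, rfl⟩ := ih r hr
    refine ⟨c, hc, (finSuccEquiv k m).injective ?_⟩
    rw [← hrp]
    simp [finSuccEquiv_apply]

/-- Sathaye's lemma: a variable `X'` of `k[X₁,…,Xₙ]` is comaximal with `X₁`
iff `X' = αX₁ + β` with `α, β ∈ k*`. -/
theorem stmt_1 {k : Type*} [Field k] (n : ℕ) (hn : 0 < n)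
    (X' : MvPolynomial (Fin n) k)
    (hvar : ∃ σ : MvPolynomial (Fin n) k ≃ₐ[k] MvPolynomial (Fin n) k,
      σ (X ⟨0, hn⟩) = X') :
    Ideal.span {X', X ⟨0, hn⟩} = ⊤ ↔
      ∃ α β : k, α ≠ 0 ∧ β ≠ 0 ∧ X' = C α * X ⟨0, hn⟩ + C β := by
  obtain ⟨m, rfl⟩ : ∃ m, n = m + 1 := ⟨n - 1, (Nat.succ_pred_eq_of_pos hn).symm⟩
  have hi0 : (⟨0, hn⟩ : Fin (m + 1)) = 0 := rfl
  rw [hi0]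
  obtain ⟨σe, hσ⟩ := hvar
  rw [hi0] at hσ
  have hσC : ∀ a : k, σe (C a) = C a := fun a => by
    rw [← algebraMap_eq]; exact σe.commutes a
  set e := finSuccEquiv k m with he
  constructor
  · intro htop
    -- extract Bezout relation
    have h1 : (1 : MvPolynomial (Fin (m + 1)) k) ∈ Ideal.span {X', X (0 : Fin (m+1))} := by
      rw [htop]; trivial
    rw [Ideal.mem_span_pair] at h1
    obtain ⟨u, v, huv⟩ := h1
    -- apply σe.symm
    set g := σe.symm (X (0 : Fin (m+1))) with hg
    have hσX : σe.symm X' = X (0 : Fin (m+1)) := by rw [← hσ]; exact σe.symm_apply_apply _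
    have huv2 : σe.symm u * X (0 : Fin (m+1)) + σe.symm v * g = 1 := by
      have := congrArg σe.symm huv
      simpa [map_add, map_mul, hσX] using this
    -- move to polynomial world and evaluate at 0
    set G := e g with hG
    have heval : (e (σe.symm v)).eval 0 * G.eval 0 = 1 := by
      have := congrArg (fun p => Polynomial.eval 0 (e p)) huv2
      simpa [he, map_add, map_mul, finSuccEquiv_X_zero] using this
    have hGu : IsUnit (G.eval 0) := IsUnit.of_mul_eq_one _ ((mul_comm (G.eval 0) _).trans heval)
    obtain ⟨c, hc, hGc⟩ := mv_isUnit_eq_C m _ hGu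
    -- X ∣ G - C (C c)
    have hdvd : Polynomial.X ∣ G - Polynomial.C (C c) := by
      rw [Polynomial.X_dvd_iff]
      simp [Polynomial.coeff_sub, ← Polynomial.coeff_zero_eq_eval_zero, ← hGc,
        Polynomial.coeff_zero_eq_eval_zero]
    obtain ⟨H, hH⟩ := hdvd
    -- pull back: g - C c = X 0 * h
    have hgh : g - C c = X (0 : Fin (m+1)) * e.symm H := by
      apply e.injective
      rw [map_sub, map_mul, ← hG, finSuccEquiv_X_zero, AlgEquiv.apply_symm_apply]
      rw [← hH]
      congr 1
      simp [he, finSuccEquiv_apply]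
    -- apply σe
    have key : X (0 : Fin (m+1)) - C c = X' * σe (e.symm H) := by
      have := congrArg σe hgh
      simpa [map_sub, map_mul, hσ, hg, hσC] using this
    -- irreducibility
    have hprime : Prime (Polynomial.X - Polynomial.C (C c) :
        Polynomial (MvPolynomial (Fin m) k)) := Polynomial.prime_X_sub_C _
    have hirr := hprime.irreducible
    have keyE : (Polynomial.X - Polynomial.C (C c) : Polynomial (MvPolynomial (Fin m) k))
        = e X' * e (σe (e.symm H)) := by
      have := congrArg e key
      rw [map_sub, map_mul, finSuccEquiv_X_zero] at this
      rw [← this]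
      congr 1
      simp [he, finSuccEquiv_apply]
    rcases hirr.isUnit_or_isUnit keyE with hu | hu
    · -- X' is a unit: contradiction since X 0 is not a unit
      exfalso
      have : IsUnit X' := by
        have := hu.map e.symm
        rwa [AlgEquiv.symm_apply_apply] at this
      have hX0 : IsUnit (X (0 : Fin (m+1)) : MvPolynomial (Fin (m+1)) k) := by
        have := this.map σe.symm
        rwa [hσX] at this
      have := hX0.map e
      rw [finSuccEquiv_X_zero] at this
      exact Polynomial.not_isUnit_X this
    · -- the cofactor is a unit constant
      have : IsUnit (σe (e.symm H)) := by
        have := hu.map e.symm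
        rwa [AlgEquiv.symm_apply_apply] at this
      obtain ⟨d, hd, hdC⟩ := mv_isUnit_eq_C (m + 1) _ this
      refine ⟨d⁻¹, -(d⁻¹ * c), inv_ne_zero hd, ?_, ?_⟩
      · simp [hd, hc]
      · have : X (0 : Fin (m+1)) - C c = X' * C d := by rw [key, hdC]
        have hX' : X' = (X (0 : Fin (m+1)) - C c) * C d⁻¹ := by
          rw [this, mul_assoc, ← map_mul, mul_inv_cancel₀ hd, map_one, mul_one]
        rw [hX', map_neg, map_mul]
        ring
  · rintro ⟨α, β, hα, hβ, rfl⟩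
    rw [Ideal.eq_top_iff_one, Ideal.mem_span_pair]
    refine ⟨C β⁻¹, -(C β⁻¹ * C α), ?_⟩
    have h1 : (C β⁻¹ * C β : MvPolynomial (Fin (m + 1)) k) = 1 := by
      rw [← map_mul, inv_mul_cancel₀ hβ, map_one]
    linear_combination h1
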